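/- arXiv:2106.12725 — 2 statements merged into one kernel-verified Lean document; each statement's English description precedes it below -/
import Mathlib

section
/- Let i ∈ [1..n] be such that SA[i] ∈ [1..n−3τ+2] and SA[i] ∉ R, and let X ∈ D be a prefix of T[SA[i]..n]. Denote δ_text = |X| − 2τ, b_X = RangeBeg(X,T), and for j ∈ [1..n] let δ(j) = |{j′ ∈ [1..n] : LCE(j,j′) ≥ |X| and T[j′..n] ⪯ T[j..n]}|. Then: (1) i = b_X + δ(SA[i]); and (2) if y is the (i − b_X)-th smallest element of {i′ ∈ [1..n′] : the reverse of X is a prefix of W[i′]}, then s^lex_y = SA[i] + δ_text. -/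
open scoped Classical

namespace CSA

/-- Character of a 1-indexed string at position `i` (junk value 0 out of range). -/
def idx (S : List ℕ) (i : ℕ) : ℕ := S.getD (i - 1) 0

/-- Substring `S[i..j)` in the 1-indexed, half-open convention. -/
def sub (S : List ℕ) (i j : ℕ) : List ℕ := (S.drop (i - 1)).take (j - i)

/-- Suffix `S[i..|S|]` (1-indexed). -/
def suf (S : List ℕ) (i : ℕ) : List ℕ := S.drop (i - 1)

/-- Length of the longest common prefix of two strings. -/
def lcp (A B : List ℕ) : ℕ := ((A.zip B).takeWhile fun p => p.1 == p.2).length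

/-- `LCE T j₁ j₂` is the length of the longest common prefix of `T[j₁..n]` and `T[j₂..n]`. -/
def LCE (T : List ℕ) (j₁ j₂ : ℕ) : ℕ := lcp (suf T j₁) (suf T j₂)

/-- `p` is a period of `S`. -/
def IsPeriod (S : List ℕ) (p : ℕ) : Prop :=
  1 ≤ p ∧ p ≤ S.length ∧ ∀ i, i + p < S.length → S.getD i 0 = S.getD (i + p) 0

/-- The shortest period of `S`. -/
noncomputable def per (S : List ℕ) : ℕ := sInf {p | IsPeriod S p}

/-- `R = {i ∈ [1..n−3τ+2] : per(T[i..i+3τ−1)) ≤ τ/3}`. -/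
noncomputable def R (T : List ℕ) (τ : ℕ) : Set ℕ :=
  {i | 1 ≤ i ∧ i + 3 * τ ≤ T.length + 2 ∧ 3 * per (sub T i (i + 3 * τ - 1)) ≤ τ}

/-- `rend(j) = min{j′ ≥ j : j′ ∉ R} + 3τ − 2`. -/
noncomputable def rend (T : List ℕ) (τ j : ℕ) : ℕ :=
  sInf {j' | j ≤ j' ∧ j' ∉ R T τ} + 3 * τ - 2

/-- `L-root(j)`: lexicographically smallest among `{T[j+t..j+t+p) : 0 ≤ t < p}`
where `p = per(T[j..j+3τ−1))`. -/
noncomputable def Lroot (T : List ℕ) (τ j : ℕ) : List ℕ :=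
  WithTop.untopD [] (((Finset.range (per (sub T j (j + 3 * τ - 1)))).image fun t =>
      sub T (j + t) (j + t + per (sub T j (j + 3 * τ - 1)))).min)

/-- `L-head(j)`: the (unique) `s ∈ [0..p)` with `T[j+s..j+s+p) = L-root(j)`. -/
noncomputable def Lhead (T : List ℕ) (τ j : ℕ) : ℕ :=
  sInf {s | s < per (sub T j (j + 3 * τ - 1)) ∧
    sub T (j + s) (j + s + per (sub T j (j + 3 * τ - 1))) = Lroot T τ j}

noncomputable def Lexp (T : List ℕ) (τ j : ℕ) : ℕ :=
  (rend T τ j - j - Lhead T τ j) / per (sub T j (j + 3 * τ - 1))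

noncomputable def Ltail (T : List ℕ) (τ j : ℕ) : ℕ :=
  (rend T τ j - j - Lhead T τ j) % per (sub T j (j + 3 * τ - 1))

noncomputable def rendfull (T : List ℕ) (τ j : ℕ) : ℕ := rend T τ j - Ltail T τ j

/-- `type(j) = +1` if `rend(j) ≤ n` and `T[rend(j)] > T[rend(j)−p]`, and `−1` otherwise. -/
noncomputable def typ (T : List ℕ) (τ j : ℕ) : ℤ :=
  if rend T τ j ≤ T.length ∧
      idx T (rend T τ j - per (sub T j (j + 3 * τ - 1))) < idx T (rend T τ j)
    then 1 else -1

noncomputable def Rminus (T : List ℕ) (τ : ℕ) : Set ℕ := {j ∈ R T τ | typ T τ j = -1}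

noncomputable def RH (T : List ℕ) (τ : ℕ) (H : List ℕ) : Set ℕ :=
  {j ∈ R T τ | Lroot T τ j = H}

noncomputable def RsH (T : List ℕ) (τ s : ℕ) (H : List ℕ) : Set ℕ :=
  {j ∈ R T τ | Lroot T τ j = H ∧ Lhead T τ j = s}

noncomputable def RminusH (T : List ℕ) (τ : ℕ) (H : List ℕ) : Set ℕ :=
  Rminus T τ ∩ RH T τ H

noncomputable def RminusSH (T : List ℕ) (τ s : ℕ) (H : List ℕ) : Set ℕ :=
  Rminus T τ ∩ RsH T τ s H

noncomputable def Rprime (T : List ℕ) (τ : ℕ) : Set ℕ := {j ∈ R T τ | j - 1 ∉ R T τ}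

/-- `Occ(P,S)`: the set of (1-indexed) starting positions of occurrences of `P` in `S`. -/
def OccSet (P S : List ℕ) : Set ℕ :=
  {j | 1 ≤ j ∧ j + P.length ≤ S.length + 1 ∧ sub S j (j + P.length) = P}

noncomputable def RangeBeg (P T : List ℕ) : ℕ :=
  Set.ncard {i | 1 ≤ i ∧ i ≤ T.length ∧ suf T i < P}

noncomputable def RangeEnd (P T : List ℕ) : ℕ := RangeBeg P T + (OccSet P T).ncard

/-- `ISA[j]`: the lexicographic rank of the suffix `T[j..n]` among all suffixes of `T`. -/
noncomputable def ISA (T : List ℕ) (j : ℕ) : ℕ :=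
  Set.ncard {j' | 1 ≤ j' ∧ j' ≤ T.length ∧ suf T j' ≤ suf T j}

/-- `succ_S(i) = min{j ∈ S ∪ {n−2τ+2} : j ≥ i}`. -/
noncomputable def succS (T : List ℕ) (τ : ℕ) (Sync : Set ℕ) (i : ℕ) : ℕ :=
  sInf {j | i ≤ j ∧ (j ∈ Sync ∨ j = T.length + 2 - 2 * τ)}

/-- The set `D` of distinguishing prefixes. -/
noncomputable def Dset (T : List ℕ) (τ : ℕ) (Sync : Set ℕ) : Set (List ℕ) :=
  {X | ∃ i, 1 ≤ i ∧ i + 3 * τ ≤ T.length + 2 ∧ i ∉ R T τ ∧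
    X = sub T i (succS T τ Sync i + 2 * τ)}

/-- `T^∞[i] = T[1 + ((i−1) mod n)]` for `i : ℤ`. -/
def tinf (T : List ℕ) (i : ℤ) : ℕ := idx T (((i - 1).emod (T.length : ℤ)).toNat + 1)

/-- `W[i]`: the reverse of `T^∞[s^lex_i − τ .. s^lex_i + 2τ)`. -/
def Wstr (T : List ℕ) (τ : ℕ) (slex : ℕ → ℕ) (i : ℕ) : List ℕ :=
  ((List.range (3 * τ)).map fun k => tinf T ((slex i : ℤ) - (τ : ℤ) + (k : ℤ))).reverse

/- Pattern versions of the `L`-decomposition functions. -/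

noncomputable def perP (τ : ℕ) (P : List ℕ) : ℕ := per (P.take (3 * τ - 1))

/-- A pattern is periodic if `|P| ≥ 3τ−1` and `per(P[1..3τ−1]) ≤ τ/3`. -/
noncomputable def Periodic (τ : ℕ) (P : List ℕ) : Prop :=
  3 * τ - 1 ≤ P.length ∧ 3 * perP τ P ≤ τ

noncomputable def pend (τ : ℕ) (P : List ℕ) : ℕ :=
  1 + perP τ P + lcp P (P.drop (perP τ P))

noncomputable def LrootP (τ : ℕ) (P : List ℕ) : List ℕ :=
  WithTop.untopD [] (((Finset.range (perP τ P)).image fun t => (P.drop t).take (perP τ P)).min)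

noncomputable def LheadP (τ : ℕ) (P : List ℕ) : ℕ :=
  sInf {s | s < perP τ P ∧ (P.drop s).take (perP τ P) = LrootP τ P}

noncomputable def LexpP (τ : ℕ) (P : List ℕ) : ℕ :=
  (pend τ P - 1 - LheadP τ P) / perP τ P

noncomputable def LtailP (τ : ℕ) (P : List ℕ) : ℕ :=
  (pend τ P - 1 - LheadP τ P) % perP τ P

noncomputable def pendfullP (τ : ℕ) (P : List ℕ) : ℕ := pend τ P - LtailP τ P

noncomputable def typP (τ : ℕ) (P : List ℕ) : ℤ :=
  if pend τ P ≤ P.length ∧ idx P (pend τ P - perP τ P) < idx P (pend τ P)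
    then 1 else -1

/-- `pow(H)`: the prefix of length `|H|·⌈τ/|H|⌉` of `H^∞`. -/
def powS (τ : ℕ) (H : List ℕ) : List ℕ :=
  (List.replicate ((τ + H.length - 1) / H.length) H).flatten

/- ## Auxiliary lemmas -/

lemma le_lcp_iff (A : List ℕ) : ∀ (B : List ℕ) (k : ℕ),
    (k ≤ lcp A B ↔ k ≤ A.length ∧ k ≤ B.length ∧ A.take k = B.take k) := by
  induction A with
  | nil => intro B k; simp [lcp]; omega
  | cons a A ih =>
    intro B k
    cases B with
    | nil => simp [lcp]; omega
    | cons b B =>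
      cases k with
      | zero => simp [lcp]
      | succ k =>
        by_cases hab : a = b
        · subst hab
          simp only [lcp, List.zip_cons_cons, List.takeWhile_cons, beq_self_eq_true,
            if_true, List.length_cons, Nat.succ_le_succ_iff, List.take_succ_cons,
            List.cons.injEq, true_and]
          exact (ih B k).trans (by simp)
        · simp only [lcp, List.zip_cons_cons, List.takeWhile_cons]
          rw [if_neg (by simpa using hab)]
          simp [hab]

lemma prefix_le {X A : List ℕ} (h : X <+: A) : X ≤ A := by
  obtain ⟨t, rfl⟩ := h
  induction X with
  | nil =>
    rcases t with _ | ⟨a, t⟩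
    · exact le_rfl
    · exact le_of_lt (List.nil_lt_cons _ _)
  | cons x X ih => exact List.cons_le_cons x ih

lemma not_lt_of_prefix {X B : List ℕ} (h : X <+: B) : ¬ B < X :=
  not_lt.mpr (prefix_le h)

lemma append_lt_append_left_iff (C : List ℕ) {A B : List ℕ} : C ++ A < C ++ B ↔ A < B := by
  induction C with
  | nil => simp
  | cons c C ih =>
    constructor
    · intro h
      have h' : List.Lex (· < ·) (c :: (C ++ A)) (c :: (C ++ B)) := h
      cases h' with
      | cons h2 => exact ih.mp h2
      | rel h2 => exact absurd h2 (lt_irrefl c)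
    · intro h
      show List.Lex (· < ·) (c :: (C ++ A)) (c :: (C ++ B))
      exact List.Lex.cons (show List.Lex _ (C++A) (C++B) from ih.mpr h)

lemma append_le_append_left_iff (C : List ℕ) {A B : List ℕ} : C ++ A ≤ C ++ B ↔ A ≤ B := by
  rw [← not_lt, ← not_lt, append_lt_append_left_iff]

lemma prefix_or_lt : ∀ (X A B : List ℕ), X <+: A → B ≤ A → X <+: B ∨ B < X := by
  intro X
  induction X with
  | nil => intro A B _ _; left; exact List.nil_prefix
  | cons x X ih =>
    intro A B hXA hBA
    obtain ⟨t, rfl⟩ := hXA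
    cases B with
    | nil => right; exact List.nil_lt_cons _ _
    | cons b B' =>
      rcases lt_or_eq_of_le hBA with hlt | heq
      · have h' : List.Lex (· < ·) (b :: B') (x :: (X ++ t)) := hlt
        cases h' with
        | cons h2 =>
          rcases ih (X ++ t) B' (List.prefix_append X t) (le_of_lt h2) with h3 | h3
          · left
            obtain ⟨t', rfl⟩ := h3
            exact ⟨t', rfl⟩
          · right; exact List.Lex.cons h3
        | rel h2 => right; exact List.Lex.rel h2
      · left; rw [heq]; exact ⟨t, rfl⟩

lemma suf_length (T : List ℕ) (j : ℕ) (hj : 1 ≤ j) (hjn : j ≤ T.length + 1) :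
    (suf T j).length = T.length + 1 - j := by
  simp [suf]; omega

lemma suf_drop (T : List ℕ) (j d : ℕ) (hj : 1 ≤ j) : (suf T j).drop d = suf T (j + d) := by
  simp [suf, List.drop_drop]; congr 1; omega

lemma suf_getD (T : List ℕ) (j m : ℕ) (hj : 1 ≤ j) :
    (suf T j).getD m 0 = idx T (j + m) := by
  simp [suf, idx, List.getD]
  congr 2
  omega

lemma prefix_suf_iff (T : List ℕ) (n : ℕ) (hlen : T.length = n) (X : List ℕ)
    (hX : 1 ≤ X.length) (j : ℕ) (hj : 1 ≤ j) :
    X <+: suf T j ↔ (j + X.length ≤ n + 1 ∧ ∀ m, m < X.length → X.getD m 0 = idx T (j + m)) := by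
  constructor
  · intro h
    have hlen2 : X.length ≤ (suf T j).length := h.length_le
    simp only [suf, List.length_drop, hlen] at hlen2
    have hb : j + X.length ≤ n + 1 := by omega
    refine ⟨hb, fun m hm => ?_⟩
    rw [← suf_getD T j m hj]
    obtain ⟨t, ht⟩ := h
    rw [← ht]
    rw [List.getD_append _ _ _ _ hm]
  · rintro ⟨hb, hpt⟩
    have hlensuf : (suf T j).length = T.length + 1 - j := by
      rw [suf_length T j hj (by omega)]
    have : X = (suf T j).take X.length := by
      apply List.ext_getElem
      · simp [hlensuf, hlen]; omega
      · intro m hm1 hm2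
        have hm : m < X.length := hm1
        have := hpt m hm
        rw [← suf_getD T j m hj] at this
        have hms : m < (suf T j).length := by
          rw [hlensuf, hlen]; omega
        simpa [List.getD_eq_getElem, hm, hms] using this
    rw [this]
    exact List.take_prefix _ _

lemma tinf_of_pos (T : List ℕ) (n : ℕ) (hlen : T.length = n) (p : ℕ)
    (hp : 1 ≤ p) (hpn : p ≤ n) : tinf T (p : ℤ) = idx T p := by
  unfold tinf
  rw [hlen]
  have e : ((p : ℤ) - 1).emod (n : ℤ) = (p : ℤ) - 1 :=
    Int.emod_eq_of_lt (by omega) (by omega)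
  rw [e]
  congr 1
  omega

lemma tinf_zero (T : List ℕ) (n : ℕ) (hlen : T.length = n) (hn : 2 ≤ n) :
    tinf T 0 = idx T n := by
  unfold tinf
  rw [hlen]
  have e : ((0 : ℤ) - 1).emod (n : ℤ) = (n : ℤ) - 1 := by
    have h1 : ((0:ℤ) - 1) = ((n:ℤ) - 1) + (n : ℤ) * (-1) := by ring
    show ((0:ℤ) - 1) % (n:ℤ) = _
    rw [h1, Int.add_mul_emod_self_left]
    show ((n:ℤ) - 1).emod (n:ℤ) = _
    exact Int.emod_eq_of_lt (by omega) (by omega)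
  rw [e]
  congr 1
  omega

lemma ncard_Icc_filter (N : ℕ) (p : ℕ → Prop) [DecidablePred p] :
    {j | 1 ≤ j ∧ j ≤ N ∧ p j}.ncard = ((Finset.Icc 1 N).filter p).card := by
  rw [← Set.ncard_coe_finset]
  congr 1
  ext j
  simp [Finset.mem_Icc, and_assoc]

lemma flatMap_single (l : List ℕ) (f : ℕ → ℤ) : (l.flatMap fun a => [f a]) = l.map f := by
  induction l with
  | nil => rfl
  | cons a l ih => simp [List.flatMap_cons, ih]

lemma rev_prefix_W_iff (T : List ℕ) (τ : ℕ) (slex : ℕ → ℕ) (i' : ℕ) (X : List ℕ)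
    (hXle : X.length ≤ 3 * τ) :
    X.reverse <+: Wstr T τ slex i' ↔
      ∀ m, m < X.length →
        X.getD m 0 = tinf T ((slex i' : ℤ) - (τ:ℤ) + ((3 * τ - X.length + m : ℕ) : ℤ)) := by
  have hW : Wstr T τ slex i' = ((List.range (3 * τ)).map
      (fun k : ℕ => tinf T ((slex i' : ℤ) - (τ : ℤ) + (k : ℤ)))).reverse := by
    simp only [Wstr]
    congr 1
    show List.map _ ((List.range (3 * τ)).flatMap fun (a : ℕ) => [(a : ℤ)]) = _
    rw [flatMap_single _ (fun a => (a : ℤ)), List.map_map]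
    rfl
  set g : ℕ → ℕ := fun k : ℕ => tinf T ((slex i' : ℤ) - (τ : ℤ) + (k : ℤ)) with hgdef
  set L := (List.range (3 * τ)).map g with hLdef
  have hLlen : L.length = 3 * τ := by simp [hLdef]
  have hget : ∀ (p : ℕ) (hp : p < L.length), L[p] = g p := by
    intro p hp
    simp [hLdef]
  rw [hW, List.reverse_prefix, List.suffix_iff_eq_drop, hLlen]
  constructor
  · intro h m hm
    rw [List.getD_eq_getElem X 0 hm]
    have hm2 : m < (L.drop (3 * τ - X.length)).length := by
      rw [List.length_drop, hLlen]; omega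
    rw [List.getElem_of_eq h hm, List.getElem_drop, hget _ _]
  · intro h
    apply List.ext_getElem
    · rw [List.length_drop, hLlen]; omega
    · intro m hm1 hm2
      rw [List.getElem_drop, hget _ _, ← List.getD_eq_getElem X 0 hm1]
      exact h m hm1

/-- Lemma: SA query for a nonperiodic position. -/
theorem statement_8
    (σ n τ : ℕ) (T : List ℕ)
    (hσ : 2 ≤ σ) (hn : 2 ≤ n) (hτ : 1 ≤ τ)
    (hlen : T.length = n) (halph : ∀ c ∈ T, c < σ)
    (hlast : idx T n = 0) (huniq : ∀ i, 1 ≤ i → i < n → idx T i ≠ 0)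
    (Sync : Set ℕ)
    (hSyncRange : ∀ i ∈ Sync, 1 ≤ i ∧ i + 2 * τ ≤ n + 1)
    (hCons : ∀ i j : ℕ, 1 ≤ i → i + 2 * τ ≤ n + 1 → 1 ≤ j → j + 2 * τ ≤ n + 1 →
      sub T i (i + 2 * τ) = sub T j (j + 2 * τ) → (i ∈ Sync ↔ j ∈ Sync))
    (hDens : ∀ i : ℕ, 1 ≤ i → i + 3 * τ ≤ n + 2 →
      (Sync ∩ Set.Ico i (i + τ) = ∅ ↔ i ∈ R T τ))
    (n' : ℕ) (hn' : Sync.ncard = n')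
    (slex : ℕ → ℕ)
    (hslexMem : ∀ i, 1 ≤ i → i ≤ n' → slex i ∈ Sync)
    (hslexSurj : ∀ x ∈ Sync, ∃ i, 1 ≤ i ∧ i ≤ n' ∧ slex i = x)
    (hslexSorted : ∀ i i', 1 ≤ i → i < i' → i' ≤ n' → suf T (slex i) < suf T (slex i'))
    (SA : ℕ → ℕ)
    (hSAmem : ∀ i, 1 ≤ i → i ≤ n → 1 ≤ SA i ∧ SA i ≤ n)
    (hSAsurj : ∀ j, 1 ≤ j → j ≤ n → ∃ i, 1 ≤ i ∧ i ≤ n ∧ SA i = j)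
    (hSAsorted : ∀ i i', 1 ≤ i → i < i' → i' ≤ n → suf T (SA i) < suf T (SA i'))
    (i : ℕ) (hi1 : 1 ≤ i) (hi2 : i ≤ n)
    (hSA1 : 1 ≤ SA i) (hSA2 : SA i + 3 * τ ≤ n + 2) (hSAR : SA i ∉ R T τ)
    (X : List ℕ) (hX : X ∈ Dset T τ Sync) (hXpref : X <+: suf T (SA i))
    (δ : ℕ → ℕ)
    (hδ : ∀ j, δ j = Set.ncard {j' | 1 ≤ j' ∧ j' ≤ n ∧ X.length ≤ LCE T j j' ∧
      suf T j' ≤ suf T j})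
    (Wset : Set ℕ)
    (hWset : Wset = {i' | 1 ≤ i' ∧ i' ≤ n' ∧ X.reverse <+: Wstr T τ slex i'}) :
    i = RangeBeg X T + δ (SA i) ∧
    (∀ y, y ∈ Wset → (Wset ∩ Set.Iic y).ncard = i - RangeBeg X T →
      slex y = SA i + (X.length - 2 * τ)) := by
  -- ## Setup: extract the defining occurrence i₀ of X and the synchronizing position s₀
  obtain ⟨i₀, hi₀1, hi₀2, hi₀R, hXdef⟩ := hX
  rw [hlen] at hi₀2
  set s₀ := succS T τ Sync i₀ with hs₀def
  -- s₀ ∈ Sync and i₀ ≤ s₀ < i₀ + τ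
  have hdens := (hDens i₀ hi₀1 hi₀2).not
  have hnonempty : (Sync ∩ Set.Ico i₀ (i₀ + τ)).Nonempty := by
    rw [Set.nonempty_iff_ne_empty]
    exact hdens.mpr hi₀R
  obtain ⟨z, hzS, hz1, hz2⟩ := hnonempty
  have hz2τ : z + 2 * τ ≤ n + 1 := (hSyncRange z hzS).2
  have hJne : {j | i₀ ≤ j ∧ (j ∈ Sync ∨ j = T.length + 2 - 2 * τ)}.Nonempty :=
    ⟨z, hz1, Or.inl hzS⟩
  have hs₀mem : i₀ ≤ s₀ ∧ (s₀ ∈ Sync ∨ s₀ = T.length + 2 - 2 * τ) := by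
    rw [hs₀def]; exact Nat.sInf_mem hJne
  have hs₀le : s₀ ≤ z := by rw [hs₀def]; exact Nat.sInf_le ⟨hz1, Or.inl hzS⟩
  clear_value s₀
  have hs₀1 : i₀ ≤ s₀ := hs₀mem.1
  have hs₀Sync : s₀ ∈ Sync := by
    rcases hs₀mem.2 with h | h
    · exact h
    · exfalso; rw [hlen] at h; omega
  have hs₀2τ : s₀ + 2 * τ ≤ n + 1 := (hSyncRange s₀ hs₀Sync).2
  have hs₀lt : s₀ < i₀ + τ := lt_of_le_of_lt hs₀le hz2
  set d : ℕ := s₀ - i₀ with hddef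
  clear_value d
  have hdτ : d < τ := by omega
  -- basic facts about X
  have hXpi₀ : X <+: suf T i₀ := by
    rw [hXdef]
    show (T.drop (i₀ - 1)).take _ <+: _
    exact List.take_prefix _ _
  have hXlen : X.length = d + 2 * τ := by
    rw [hXdef]
    show ((T.drop (i₀-1)).take (s₀ + 2*τ - i₀)).length = _
    simp only [List.length_take, List.length_drop, hlen]
    omega
  have hX1 : 1 ≤ X.length := by omega
  have hXn1 : ∀ j, 1 ≤ j → X <+: suf T j → j + X.length ≤ n + 1 := by
    intro j hj h
    exact ((prefix_suf_iff T n hlen X hX1 j hj).mp h).1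
  have hXpt : ∀ j, 1 ≤ j → X <+: suf T j → ∀ m, m < X.length → X.getD m 0 = idx T (j + m) :=
    fun j hj h => ((prefix_suf_iff T n hlen X hX1 j hj).mp h).2
  -- ## The window transfer: any occurrence of X induces a synchronizing position at offset d
  have hwin : ∀ j, 1 ≤ j → X <+: suf T j → sub T (j + d) (j + d + 2 * τ) = X.drop d := by
    intro j hj hpref
    obtain ⟨t, ht⟩ := hpref
    have h1 : sub T (j + d) (j + d + 2 * τ) = ((suf T j).drop d).take (2 * τ) := by
      rw [suf_drop T j d hj]
      show (T.drop (j + d - 1)).take _ = (T.drop (j + d - 1)).take _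
      congr 1
      omega
    rw [h1, ← ht, List.drop_append_of_le_length (by omega),
      List.take_append_of_le_length (by simp; omega)]
    apply List.take_of_length_le
    simp
    omega
  have hsync : ∀ j, 1 ≤ j → X <+: suf T j → j + d ∈ Sync := by
    intro j hj hpref
    have hb := hXn1 j hj hpref
    have h1 : sub T (i₀ + d) (i₀ + d + 2 * τ) = X.drop d := hwin i₀ hi₀1 hXpi₀
    have h2 : sub T (j + d) (j + d + 2 * τ) = X.drop d := hwin j hj hpref
    have := hCons (i₀ + d) (j + d) (by omega) (by omega) (by omega) (by omega)
      (h1.trans h2.symm)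
    rw [← this]
    have : i₀ + d = s₀ := by omega
    rw [this]
    exact hs₀Sync
  -- ## Part 1
  have hsuf_inj : ∀ j j', 1 ≤ j → j ≤ n → 1 ≤ j' → j' ≤ n → suf T j = suf T j' → j = j' := by
    intro j j' h1 h2 h3 h4 he
    have := congrArg List.length he
    rw [suf_length T j h1 (by omega), suf_length T j' h3 (by omega)] at this
    omega
  have hSAinj : ∀ a b, 1 ≤ a → a ≤ n → 1 ≤ b → b ≤ n → SA a = SA b → a = b := by
    intro a b h1 h2 h3 h4 he
    rcases lt_trichotomy a b with h | h | h
    · exact absurd (hSAsorted a b h1 h h4) (by rw [he]; exact lt_irrefl _)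
    · exact h
    · exact absurd (hSAsorted b a h3 h h2) (by rw [he]; exact lt_irrefl _)
  have hSAle : ∀ a b, 1 ≤ a → a ≤ n → 1 ≤ b → b ≤ n →
      (a ≤ b ↔ suf T (SA a) ≤ suf T (SA b)) := by
    intro a b h1 h2 h3 h4
    constructor
    · intro h
      rcases eq_or_lt_of_le h with h | h
      · rw [h]
      · exact le_of_lt (hSAsorted a b h1 h h4)
    · intro h
      by_contra hc
      exact absurd (hSAsorted b a h3 (not_le.mp hc) h2) (not_lt.mpr h)
  -- i is the rank of SA i
  have hrankSA : i = ((Finset.Icc 1 n).filter (fun j => suf T j ≤ suf T (SA i))).card := by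
    have himg : (Finset.Icc 1 n).filter (fun j => suf T j ≤ suf T (SA i))
        = (Finset.Icc 1 i).image SA := by
      ext j
      simp only [Finset.mem_filter, Finset.mem_Icc, Finset.mem_image]
      constructor
      · rintro ⟨⟨hj1, hj2⟩, hle⟩
        obtain ⟨k, hk1, hk2, hk3⟩ := hSAsurj j hj1 hj2
        refine ⟨k, ⟨hk1, ?_⟩, hk3⟩
        by_contra hc
        have := hSAsorted i k hi1 (not_le.mp hc) hk2
        rw [hk3] at this
        exact absurd this (not_lt.mpr hle)
      · rintro ⟨k, ⟨hk1, hki⟩, rfl⟩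
        have hm := hSAmem k hk1 (le_trans hki hi2)
        exact ⟨hm, (hSAle k i hk1 (le_trans hki hi2) hi1 hi2).mp hki⟩
    rw [himg, Finset.card_image_of_injOn, Nat.card_Icc]
    · omega
    · intro a ha b hb he
      simp only [Finset.coe_Icc, Set.mem_Icc] at ha hb
      exact hSAinj a b ha.1 (le_trans ha.2 hi2) hb.1 (le_trans hb.2 hi2) he
  -- the LCE condition is equivalent to X being a prefix
  have hlce : ∀ j', (X.length ≤ LCE T (SA i) j' ↔ X <+: suf T j') := by
    intro j'
    rw [LCE, le_lcp_iff]
    have h1 : X = (suf T (SA i)).take X.length := List.prefix_iff_eq_take.mp hXpref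
    constructor
    · rintro ⟨ha, hb, hc⟩
      exact List.prefix_iff_eq_take.mpr (h1.trans hc)
    · intro h
      refine ⟨hXpref.length_le, h.length_le, ?_⟩
      rw [← h1, ← List.prefix_iff_eq_take.mp h]
  -- the splitting of the rank set
  have hsplit : (Finset.Icc 1 n).filter (fun j => suf T j ≤ suf T (SA i))
      = ((Finset.Icc 1 n).filter (fun j => suf T j < X))
        ∪ ((Finset.Icc 1 n).filter (fun j => X <+: suf T j ∧ suf T j ≤ suf T (SA i))) := by
    ext j
    simp only [Finset.mem_filter, Finset.mem_union, Finset.mem_Icc]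
    constructor
    · rintro ⟨hj, hle⟩
      rcases prefix_or_lt X (suf T (SA i)) (suf T j) hXpref hle with h | h
      · exact Or.inr ⟨hj, h, hle⟩
      · exact Or.inl ⟨hj, h⟩
    · rintro (⟨hj, hlt⟩ | ⟨hj, _, hle⟩)
      · exact ⟨hj, le_of_lt (lt_of_lt_of_le hlt (prefix_le hXpref))⟩
      · exact ⟨hj, hle⟩
  have hdisj : Disjoint ((Finset.Icc 1 n).filter (fun j => suf T j < X))
      ((Finset.Icc 1 n).filter (fun j => X <+: suf T j ∧ suf T j ≤ suf T (SA i))) := by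
    rw [Finset.disjoint_left]
    intro j hj1 hj2
    simp only [Finset.mem_filter] at hj1 hj2
    exact not_lt_of_prefix hj2.2.1 hj1.2
  have hRB : RangeBeg X T = ((Finset.Icc 1 n).filter (fun j => suf T j < X)).card := by
    rw [RangeBeg, hlen]
    exact ncard_Icc_filter n _
  have hδi : δ (SA i) = ((Finset.Icc 1 n).filter
      (fun j => X <+: suf T j ∧ suf T j ≤ suf T (SA i))).card := by
    rw [hδ]
    rw [ncard_Icc_filter n (fun j' => X.length ≤ LCE T (SA i) j' ∧ suf T j' ≤ suf T (SA i))]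
    apply congrArg Finset.card
    apply Finset.filter_congr
    intro j _
    rw [hlce j]
  have hpart1 : i = RangeBeg X T + δ (SA i) := by
    rw [hRB, hδi, ← Finset.card_union_of_disjoint hdisj, ← hsplit]
    exact hrankSA
  refine ⟨hpart1, ?_⟩
  -- ## Part 2
  have hXle3 : X.length ≤ 3 * τ := by omega
  -- characterization of the W-condition
  have hWchar : ∀ i', 1 ≤ i' → i' ≤ n' →
      (X.reverse <+: Wstr T τ slex i' ↔ (d + 1 ≤ slex i' ∧ X <+: suf T (slex i' - d))) := by
    intro i' h1 h2
    have hsS : slex i' ∈ Sync := hslexMem i' h1 h2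
    obtain ⟨hs1, hs2⟩ := hSyncRange _ hsS
    have harg : ∀ m : ℕ, ((slex i' : ℤ) - (τ:ℤ) + ((3 * τ - X.length + m : ℕ) : ℤ))
        = (slex i' : ℤ) - (d:ℕ) + (m:ℕ) := by
      intro m
      omega
    have hL : X.reverse <+: Wstr T τ slex i' ↔
        (∀ m, m < X.length → X.getD m 0 = tinf T ((slex i' : ℤ) - (d:ℕ) + (m:ℕ))) := by
      rw [rev_prefix_W_iff T τ slex i' X hXle3]
      constructor
      · intro h m hm
        rw [← harg m]
        exact h m hm
      · intro h m hm
        rw [harg m]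
        exact h m hm
    by_cases hds : d + 1 ≤ slex i'
    · rw [hL]
      have hsd : slex i' - d + X.length ≤ n + 1 := by omega
      have htv : ∀ m, m < X.length →
          tinf T ((slex i' : ℤ) - d + m) = idx T (slex i' - d + m) := by
        intro m hm
        have he : ((slex i' : ℤ) - d + m) = ((slex i' - d + m : ℕ) : ℤ) := by omega
        rw [he]
        exact tinf_of_pos T n hlen _ (by omega) (by omega)
      rw [prefix_suf_iff T n hlen X hX1 (slex i' - d) (by omega)]
      constructor
      · intro h
        refine ⟨hds, hsd, fun m hm => ?_⟩
        rw [h m hm, htv m hm]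
      · rintro ⟨_, _, h⟩ m hm
        rw [h m hm, ← htv m hm]
    · constructor
      · intro h
        exfalso
        have hm : d - slex i' < X.length := by omega
        have heq := hL.mp h (d - slex i') hm
        have hz : ((slex i' : ℤ) - d + (d - slex i' : ℕ)) = 0 := by omega
        rw [hz, tinf_zero T n hlen hn, hlast] at heq
        have heq2 := hXpt i₀ hi₀1 hXpi₀ (d - slex i') hm
        have hne := huniq (i₀ + (d - slex i')) (by omega) (by omega)
        rw [← heq2, heq] at hne
        exact hne rfl
      · rintro ⟨h, _⟩
        omega
  -- part 2 main argument
  intro y hy hrank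
  rw [hWset] at hy
  obtain ⟨hy1, hy2, hyW⟩ := hy
  obtain ⟨hys, hypref⟩ := (hWchar y hy1 hy2).mp hyW
  set jy := slex y - d with hjydef
  have hsy : slex y ∈ Sync := hslexMem y hy1 hy2
  have hsy2 := (hSyncRange _ hsy).2
  have hjy1 : 1 ≤ jy := by omega
  have hjyn : jy ≤ n := by omega
  have hjyd : jy + d = slex y := by omega
  clear_value jy
  -- order transfer forward by d
  have htransfer : ∀ j₁ j₂, 1 ≤ j₁ → 1 ≤ j₂ → X <+: suf T j₁ → X <+: suf T j₂ →
      (suf T j₁ ≤ suf T j₂ ↔ suf T (j₁ + d) ≤ suf T (j₂ + d)) := by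
    have hdec : ∀ j, 1 ≤ j → X <+: suf T j → suf T j = X.take d ++ suf T (j + d) := by
      intro j hj hp
      obtain ⟨t, ht⟩ := hp
      rw [← suf_drop T j d hj, ← ht, List.drop_append_of_le_length (by omega),
        ← List.append_assoc, List.take_append_drop]
    intro j₁ j₂ h1 h2 hp1 hp2
    rw [hdec j₁ h1 hp1, hdec j₂ h2 hp2]
    exact append_le_append_left_iff _
  -- slex order
  have hslexle : ∀ a b, 1 ≤ a → a ≤ n' → 1 ≤ b → b ≤ n' →
      (a ≤ b ↔ suf T (slex a) ≤ suf T (slex b)) := by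
    intro a b h1 h2 h3 h4
    constructor
    · intro h
      rcases eq_or_lt_of_le h with h | h
      · rw [h]
      · exact le_of_lt (hslexSorted a b h1 h h4)
    · intro h
      by_contra hc
      exact absurd (hslexSorted b a h3 (not_le.mp hc) h2) (not_lt.mpr h)
  -- rewrite the rank as a finset cardinality
  have hWrank : (Wset ∩ Set.Iic y).ncard
      = ((Finset.Icc 1 n').filter
          (fun i' => X.reverse <+: Wstr T τ slex i' ∧ i' ≤ y)).card := by
    rw [hWset]
    have hseteq : {i' | 1 ≤ i' ∧ i' ≤ n' ∧ X.reverse <+: Wstr T τ slex i'} ∩ Set.Iic y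
        = {i' | 1 ≤ i' ∧ i' ≤ n' ∧ (X.reverse <+: Wstr T τ slex i' ∧ i' ≤ y)} := by
      ext j
      simp only [Set.mem_inter_iff, Set.mem_setOf_eq, Set.mem_Iic]
      tauto
    rw [hseteq]
    exact ncard_Icc_filter n' _
  -- the bijection between W-positions and text positions
  have hbij : ((Finset.Icc 1 n').filter
        (fun i' => X.reverse <+: Wstr T τ slex i' ∧ i' ≤ y)).card
      = ((Finset.Icc 1 n).filter
          (fun j => X <+: suf T j ∧ suf T j ≤ suf T jy)).card := by
    apply Finset.card_bij (fun i' _ => slex i' - d)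
    · intro a ha
      simp only [Finset.mem_filter, Finset.mem_Icc] at ha
      obtain ⟨⟨ha1, ha2⟩, haW, hay⟩ := ha
      obtain ⟨had, hap⟩ := (hWchar a ha1 ha2).mp haW
      have hsa2 := (hSyncRange _ (hslexMem a ha1 ha2)).2
      simp only [Finset.mem_filter, Finset.mem_Icc]
      refine ⟨⟨by omega, by omega⟩, hap, ?_⟩
      have h1 : suf T (slex a) ≤ suf T (slex y) := (hslexle a y ha1 ha2 hy1 hy2).mp hay
      have h2 := htransfer (slex a - d) jy (by omega) hjy1 hap hypref
      rw [show slex a - d + d = slex a by omega, hjyd] at h2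
      exact h2.mpr h1
    · intro a ha b hb he
      simp only [Finset.mem_filter, Finset.mem_Icc] at ha hb
      obtain ⟨had, _⟩ := (hWchar a ha.1.1 ha.1.2).mp ha.2.1
      obtain ⟨hbd, _⟩ := (hWchar b hb.1.1 hb.1.2).mp hb.2.1
      have hab : slex a = slex b := by omega
      by_contra hne
      rcases lt_or_gt_of_ne hne with h | h
      · exact absurd (hslexSorted a b ha.1.1 h hb.1.2) (by rw [hab]; exact lt_irrefl _)
      · exact absurd (hslexSorted b a hb.1.1 h ha.1.2) (by rw [hab]; exact lt_irrefl _)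
    · intro j hj
      simp only [Finset.mem_filter, Finset.mem_Icc] at hj
      obtain ⟨⟨hj1, hj2⟩, hjp, hjle⟩ := hj
      have hjS : j + d ∈ Sync := hsync j hj1 hjp
      obtain ⟨a, ha1, ha2, ha3⟩ := hslexSurj _ hjS
      have haW : X.reverse <+: Wstr T τ slex a := by
        apply (hWchar a ha1 ha2).mpr
        rw [ha3]
        exact ⟨by omega, by rw [show j + d - d = j by omega]; exact hjp⟩
      have hay : a ≤ y := by
        apply (hslexle a y ha1 ha2 hy1 hy2).mpr
        rw [ha3, ← hjyd]
        exact (htransfer j jy hj1 hjy1 hjp hypref).mp hjle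
      refine ⟨a, ?_, by rw [ha3]; omega⟩
      simp only [Finset.mem_filter, Finset.mem_Icc]
      exact ⟨⟨ha1, ha2⟩, haW, hay⟩
  -- equal ranks force jy = SA i
  have hSAn : SA i ≤ n := (hSAmem i hi1 hi2).2
  have hcards : ((Finset.Icc 1 n).filter
        (fun j => X <+: suf T j ∧ suf T j ≤ suf T jy)).card
      = ((Finset.Icc 1 n).filter
          (fun j => X <+: suf T j ∧ suf T j ≤ suf T (SA i))).card := by
    rw [← hbij, ← hWrank, hrank]
    omega
  have hjySA : jy = SA i := by
    rcases lt_trichotomy (suf T jy) (suf T (SA i)) with h | h | h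
    · exfalso
      have hss : ((Finset.Icc 1 n).filter
            (fun j => X <+: suf T j ∧ suf T j ≤ suf T jy))
          ⊂ ((Finset.Icc 1 n).filter
            (fun j => X <+: suf T j ∧ suf T j ≤ suf T (SA i))) := by
        constructor
        · intro j hj
          simp only [Finset.mem_filter] at hj ⊢
          exact ⟨hj.1, hj.2.1, le_of_lt (lt_of_le_of_lt hj.2.2 h)⟩
        · intro hsub
          have hmem : SA i ∈ (Finset.Icc 1 n).filter
              (fun j => X <+: suf T j ∧ suf T j ≤ suf T (SA i)) := by
            simp only [Finset.mem_filter, Finset.mem_Icc]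
            exact ⟨⟨hSA1, hSAn⟩, hXpref, le_refl _⟩
          have := hsub hmem
          simp only [Finset.mem_filter] at this
          exact absurd (lt_of_le_of_lt this.2.2 h) (lt_irrefl _)
      exact absurd hcards (Nat.ne_of_lt (Finset.card_lt_card hss))
    · exact hsuf_inj jy (SA i) hjy1 hjyn hSA1 hSAn h
    · exfalso
      have hss : ((Finset.Icc 1 n).filter
            (fun j => X <+: suf T j ∧ suf T j ≤ suf T (SA i)))
          ⊂ ((Finset.Icc 1 n).filter
            (fun j => X <+: suf T j ∧ suf T j ≤ suf T jy)) := by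
        constructor
        · intro j hj
          simp only [Finset.mem_filter] at hj ⊢
          exact ⟨hj.1, hj.2.1, le_of_lt (lt_of_le_of_lt hj.2.2 h)⟩
        · intro hsub
          have hmem : jy ∈ (Finset.Icc 1 n).filter
              (fun j => X <+: suf T j ∧ suf T j ≤ suf T jy) := by
            simp only [Finset.mem_filter, Finset.mem_Icc]
            exact ⟨⟨hjy1, hjyn⟩, hypref, le_refl _⟩
          have := hsub hmem
          simp only [Finset.mem_filter] at this
          exact absurd (lt_of_le_of_lt this.2.2 h) (lt_irrefl _)
      exact absurd hcards.symm (Nat.ne_of_lt (Finset.card_lt_card hss))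
  have : X.length - 2 * τ = d := by omega
  rw [this]
  omega
end CSA
end

section
/- Let P be a periodic pattern of length m over {0,…,σ−1} satisfying pend(P) ≤ m. Then: (1) for every nonempty string S over {0,…,σ−1}, if the longest common prefix of P and S has length ≥ pend(P) (in particular, if P is a prefix of S), then S is periodic and it holds pend(S) = pend(P), L-tail(S) = L-tail(P), pendfull(S) = pendfull(P), L-exp(S) = L-exp(P), and type(S) = type(P); (2) if j ∈ Occ(P,T), then j ∈ R and it holds rend(j) − j = pend(P) − 1, L-tail(j) = L-tail(P), rendfull(j) − j = pendfull(P) − 1, L-exp(j) = L-exp(P), and type(j) = type(P). -/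
open scoped Classical

namespace CSA

lemma getD_drop' (L : List ℕ) (a i : ℕ) : (L.drop a).getD i 0 = L.getD (a+i) 0 := by
  simp [List.getD_eq_getElem?_getD, List.getElem?_drop]

lemma getD_take' (L : List ℕ) {i k : ℕ} (h : i < k) : (L.take k).getD i 0 = L.getD i 0 := by
  simp [List.getD_eq_getElem?_getD, List.getElem?_take, h]

lemma lcp_nil_left (B : List ℕ) : lcp [] B = 0 := by simp [lcp]

lemma lcp_nil_right (A : List ℕ) : lcp A [] = 0 := by simp [lcp]

lemma lcp_cons (a b : ℕ) (A B : List ℕ) :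
    lcp (a::A) (b::B) = if a = b then lcp A B + 1 else 0 := by
  simp only [lcp, List.zip_cons_cons, List.takeWhile_cons]
  by_cases hab : a = b <;> simp [hab]

lemma lcp_le_left (A B : List ℕ) : lcp A B ≤ A.length := by
  induction A generalizing B with
  | nil => simp [lcp_nil_left]
  | cons a A ih =>
    cases B with
    | nil => simp [lcp_nil_right]
    | cons b B =>
      rw [lcp_cons]; split
      · simpa using ih B
      · simp

lemma lcp_le_right (A B : List ℕ) : lcp A B ≤ B.length := by
  induction A generalizing B with
  | nil => simp [lcp_nil_left]
  | cons a A ih =>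
    cases B with
    | nil => simp [lcp_nil_right]
    | cons b B =>
      rw [lcp_cons]; split
      · simpa using ih B
      · simp

lemma lcp_agree (A B : List ℕ) : ∀ i < lcp A B, A.getD i 0 = B.getD i 0 := by
  induction A generalizing B with
  | nil => simp [lcp_nil_left]
  | cons a A ih =>
    cases B with
    | nil => simp [lcp_nil_right]
    | cons b B =>
      intro i hi
      rw [lcp_cons] at hi
      by_cases hab : a = b
      · rw [if_pos hab] at hi
        cases i with
        | zero => simpa using hab
        | succ i => simpa using ih B i (by omega)
      · rw [if_neg hab] at hi; omega

lemma le_lcp (A B : List ℕ) (k : ℕ) (hA : k ≤ A.length) (hB : k ≤ B.length)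
    (h : ∀ i < k, A.getD i 0 = B.getD i 0) : k ≤ lcp A B := by
  induction A generalizing B k with
  | nil => simp at hA; omega
  | cons a A ih =>
    cases B with
    | nil => simp at hB; omega
    | cons b B =>
      cases k with
      | zero => omega
      | succ k =>
        have hab : a = b := by simpa using h 0 (by omega)
        rw [lcp_cons, if_pos hab]
        have := ih B k (by simpa using hA) (by simpa using hB)
          (fun i hi => by simpa using h (i+1) (by omega))
        omega

lemma lcp_mismatch (A B : List ℕ) (hA : lcp A B < A.length) (hB : lcp A B < B.length) :
    A.getD (lcp A B) 0 ≠ B.getD (lcp A B) 0 := by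
  induction A generalizing B with
  | nil => simp at hA
  | cons a A ih =>
    cases B with
    | nil => simp at hB
    | cons b B =>
      by_cases hab : a = b
      · rw [lcp_cons, if_pos hab] at *
        simpa using ih B (by simpa using hA) (by simpa using hB)
      · rw [lcp_cons, if_neg hab] at *
        simpa using hab

lemma lcp_eq_of (A B : List ℕ) (k : ℕ) (hA : k < A.length) (hB : k < B.length)
    (hag : ∀ i < k, A.getD i 0 = B.getD i 0) (hne : A.getD k 0 ≠ B.getD k 0) :
    lcp A B = k := by
  have h1 : k ≤ lcp A B := le_lcp A B k (by omega) (by omega) hag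
  by_contra hto
  have hk : k < lcp A B := by omega
  exact hne (lcp_agree A B k hk)

lemma isPeriod_length {S : List ℕ} (h : S ≠ []) : IsPeriod S S.length :=
  ⟨List.length_pos_iff.mpr h, le_refl _, fun i hi => by omega⟩

lemma per_isPeriod {S : List ℕ} (h : S ≠ []) : IsPeriod S (per S) := by
  have : S.length ∈ {p | IsPeriod S p} := isPeriod_length h
  exact Nat.sInf_mem ⟨S.length, this⟩

lemma per_le {S : List ℕ} {q : ℕ} (h : IsPeriod S q) : per S ≤ q := Nat.sInf_le h

lemma take_drop_ext (A B : List ℕ) (a b k : ℕ) (ha : a + k ≤ A.length)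
    (hb : b + k ≤ B.length) (h : ∀ i < k, A.getD (a+i) 0 = B.getD (b+i) 0) :
    (A.drop a).take k = (B.drop b).take k := by
  apply List.ext_getElem
  · simp; omega
  · intro i h1 h2
    have hi : i < k := by simp at h1; omega
    have hiA : a + i < A.length := by omega
    have hiB : b + i < B.length := by omega
    have e1 : ((A.drop a).take k)[i] = A.getD (a+i) 0 := by
      rw [List.getElem_take, List.getElem_drop, List.getD_eq_getElem A 0 hiA]
    have e2 : ((B.drop b).take k)[i] = B.getD (b+i) 0 := by
      rw [List.getElem_take, List.getElem_drop, List.getD_eq_getElem B 0 hiB]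
    rw [e1, e2]; exact h i hi

lemma walk_period (f : ℕ → ℕ) (L g : ℕ)
    (hper : ∀ i, i + g < L → f i = f (i+g)) :
    ∀ k a, a + k*g < L → f a = f (a + k*g) := by
  intro k
  induction k with
  | zero => simp
  | succ k ih =>
    intro a h
    rw [Nat.succ_mul] at h ⊢
    have h1 : a + k*g < L := by omega
    rw [ih a h1]
    have h2 := hper (a + k*g) (by omega)
    rw [← Nat.add_assoc]
    exact h2

lemma congr_mod_period (f : ℕ → ℕ) (L g a b : ℕ) (hg : 1 ≤ g)
    (hper : ∀ i, i + g < L → f i = f (i+g)) (hab : a ≤ b) (hb : b < L)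
    (hdvd : g ∣ (b - a)) : f a = f b := by
  obtain ⟨k, hk⟩ := hdvd
  rw [Nat.mul_comm] at hk
  have hb' : b = a + k*g := by omega
  rw [hb']
  exact walk_period f L g hper k a (by omega)

lemma fine_wilf_aux : ∀ n p q, p + q = n → 1 ≤ p → 1 ≤ q →
    ∀ (f : ℕ → ℕ) (L : ℕ), (∀ i, i + p < L → f i = f (i+p)) →
      (∀ i, i + q < L → f i = f (i+q)) → p + q ≤ L →
      ∀ i, i + Nat.gcd p q < L → f i = f (i + Nat.gcd p q) := by
  intro n
  induction n using Nat.strong_induction_on with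
  | _ n ih =>
  intro p q hn hp hq f L hfp hfq hL i hi
  rcases Nat.lt_trichotomy p q with hlt | heq | hgt
  · -- p < q, recurse on (p, q - p)
    set r := q - p with hr
    have hr1 : 1 ≤ r := by omega
    have hfr : ∀ i, i + r < L → f i = f (i+r) := by
      intro i hiL
      by_cases hc : i + q < L
      · have h1 := hfp (i + r) (by omega)
        rw [hfq i hc, h1]; congr 1; omega
      · have hip : p ≤ i := by omega
        have e1 : f i = f (i - p) := by
          rw [hfp (i - p) (by omega)]; congr 1; omega
        have e2 : f (i + r) = f (i - p) := by
          have := hfq (i - p) (by omega)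
          rw [this]; congr 1; omega
        rw [e1, e2]
      
    have hg : Nat.gcd p r = Nat.gcd p q := by
      rw [hr, Nat.gcd_sub_self_right (by omega)]
    have := ih (p + r) (by omega) p r rfl hp hr1 f L hfp hfr (by omega) i (by rwa [hg])
    rwa [hg] at this
  · subst heq
    rw [Nat.gcd_self] at hi ⊢
    exact hfp i hi
  · -- q < p
    set r := p - q with hr
    have hr1 : 1 ≤ r := by omega
    have hfr : ∀ i, i + r < L → f i = f (i+r) := by
      intro i hiL
      by_cases hc : i + p < L
      · have h1 := hfq (i + r) (by omega)
        rw [hfp i hc, h1]; congr 1; omega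
      · have hip : q ≤ i := by omega
        have e1 : f i = f (i - q) := by
          rw [hfq (i - q) (by omega)]; congr 1; omega
        have e2 : f (i + r) = f (i - q) := by
          have := hfp (i - q) (by omega)
          rw [this]; congr 1; omega
        rw [e1, e2]
    have hg : Nat.gcd r q = Nat.gcd p q := by
      rw [hr, Nat.gcd_comm, Nat.gcd_sub_self_right (by omega), Nat.gcd_comm]
    have := ih (r + q) (by omega) r q rfl hr1 hq f L hfr hfq (by omega) i (by rwa [hg])
    rwa [hg] at this

lemma fine_wilf (p q : ℕ) (hp : 1 ≤ p) (hq : 1 ≤ q)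
    (f : ℕ → ℕ) (L : ℕ) (hfp : ∀ i, i + p < L → f i = f (i+p))
    (hfq : ∀ i, i + q < L → f i = f (i+q)) (hL : p + q ≤ L) :
    ∀ i, i + Nat.gcd p q < L → f i = f (i + Nat.gcd p q) :=
  fine_wilf_aux (p+q) p q rfl hp hq f L hfp hfq hL

lemma take_ext (A B : List ℕ) (k : ℕ) (ha : k ≤ A.length) (hb : k ≤ B.length)
    (h : ∀ i < k, A.getD i 0 = B.getD i 0) : A.take k = B.take k := by
  have := take_drop_ext A B 0 0 k (by omega) (by omega) (by simpa using h)
  simpa using this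

lemma Pfacts (τ : ℕ) (P : List ℕ) (hτ : 1 ≤ τ) (hper : Periodic τ P)
    (hpend : pend τ P ≤ P.length) :
    1 ≤ perP τ P ∧ 3 * perP τ P ≤ τ ∧ 3 ≤ τ ∧ 3 * τ ≤ pend τ P ∧
    lcp P (P.drop (perP τ P)) = pend τ P - 1 - perP τ P ∧
    (∀ i, i + perP τ P < pend τ P - 1 → P.getD i 0 = P.getD (i + perP τ P) 0) ∧
    P.getD (pend τ P - 1 - perP τ P) 0 ≠ P.getD (pend τ P - 1) 0 := by
  obtain ⟨hlenP, hp3⟩ := hper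
  have hτ2 : 1 ≤ 3 * τ - 1 := by omega
  have hne : P.take (3 * τ - 1) ≠ [] := by
    intro h
    have h2 : (P.take (3 * τ - 1)).length = 0 := by rw [h]; rfl
    rw [List.length_take] at h2
    omega
  have hip : IsPeriod (P.take (3 * τ - 1)) (perP τ P) := per_isPeriod hne
  have hp1 : 1 ≤ perP τ P := hip.1
  have hτ3 : 3 ≤ τ := by omega
  have hlen_take : (P.take (3 * τ - 1)).length = 3 * τ - 1 := by simp; omega
  have hag : ∀ i, i + perP τ P < 3 * τ - 1 → P.getD i 0 = P.getD (i + perP τ P) 0 := by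
    intro i hi
    have h2 := hip.2.2 i (by rw [hlen_take]; exact hi)
    rwa [getD_take' _ (by omega), getD_take' _ hi] at h2
  have hlcp1 : 3 * τ - 1 - perP τ P ≤ lcp P (P.drop (perP τ P)) := by
    apply le_lcp
    · omega
    · simp; omega
    · intro i hi
      rw [getD_drop']
      have := hag i (by omega)
      rwa [Nat.add_comm i (perP τ P)] at this
  have he3 : 3 * τ ≤ pend τ P := by
    unfold pend
    omega
  have hlcpv : lcp P (P.drop (perP τ P)) = pend τ P - 1 - perP τ P := by
    unfold pend
    omega
  have hagE : ∀ i, i + perP τ P < pend τ P - 1 → P.getD i 0 = P.getD (i + perP τ P) 0 := by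
    intro i hi
    have h2 := lcp_agree P (P.drop (perP τ P)) i (by omega)
    rw [getD_drop'] at h2
    rwa [Nat.add_comm (perP τ P) i] at h2
  have hbreak : P.getD (pend τ P - 1 - perP τ P) 0 ≠ P.getD (pend τ P - 1) 0 := by
    have hA : lcp P (P.drop (perP τ P)) < P.length := by omega
    have hB : lcp P (P.drop (perP τ P)) < (P.drop (perP τ P)).length := by
      simp
      omega
    have h2 := lcp_mismatch P (P.drop (perP τ P)) hA hB
    rw [getD_drop', hlcpv] at h2
    have harith : perP τ P + (pend τ P - 1 - perP τ P) = pend τ P - 1 := by omega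
    rwa [harith] at h2
  exact ⟨hp1, hp3, hτ3, he3, hlcpv, hagE, hbreak⟩

lemma part1 (τ : ℕ) (P : List ℕ) (hτ : 1 ≤ τ) (hper : Periodic τ P)
    (hpend : pend τ P ≤ P.length) (S : List ℕ) (hlcp : pend τ P ≤ lcp P S) :
    Periodic τ S ∧ pend τ S = pend τ P ∧ LtailP τ S = LtailP τ P ∧
      pendfullP τ S = pendfullP τ P ∧ LexpP τ S = LexpP τ P ∧ typP τ S = typP τ P := by
  obtain ⟨hp1, hp3, hτ3, he3, hlcpv, hagE, hbreak⟩ := Pfacts τ P hτ hper hpend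
  have hlenP := hper.1
  have hSlen : pend τ P ≤ S.length := le_trans hlcp (lcp_le_right P S)
  have hag : ∀ i < pend τ P, P.getD i 0 = S.getD i 0 :=
    fun i hi => lcp_agree P S i (lt_of_lt_of_le hi hlcp)
  have htake : S.take (3 * τ - 1) = P.take (3 * τ - 1) := by
    apply take_ext S P (3 * τ - 1) (by omega) (by omega)
    intro i hi
    exact (hag i (by omega)).symm
  have hperS : perP τ S = perP τ P := by
    unfold perP
    rw [htake]
  have hSag : ∀ i, i + perP τ P < pend τ P - 1 → S.getD i 0 = S.getD (i + perP τ P) 0 := by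
    intro i hi
    rw [← hag i (by omega), ← hag (i + perP τ P) (by omega)]
    exact hagE i hi
  have hSbreak : S.getD (pend τ P - 1 - perP τ P) 0 ≠ S.getD (pend τ P - 1) 0 := by
    rw [← hag _ (by omega), ← hag _ (by omega)]
    exact hbreak
  have hlcpS : lcp S (S.drop (perP τ P)) = pend τ P - 1 - perP τ P := by
    apply lcp_eq_of
    · omega
    · simp; omega
    · intro i hi
      rw [getD_drop', Nat.add_comm (perP τ P) i]
      exact hSag i (by omega)
    · rw [getD_drop']
      have harith : perP τ P + (pend τ P - 1 - perP τ P) = pend τ P - 1 := by omega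
      rw [harith]
      exact hSbreak
  have hpendS : pend τ S = pend τ P := by
    unfold pend
    rw [hperS, hlcpS]
    omega
  have hwin : ∀ t < perP τ P, (S.drop t).take (perP τ P) = (P.drop t).take (perP τ P) := by
    intro t ht
    apply take_drop_ext S P t t (perP τ P) (by omega) (by omega)
    intro i hi
    exact (hag (t + i) (by omega)).symm
  have hroot : LrootP τ S = LrootP τ P := by
    unfold LrootP
    rw [hperS]
    have himg : (Finset.range (perP τ P)).image (fun t => (S.drop t).take (perP τ P)) =
        (Finset.range (perP τ P)).image (fun t => (P.drop t).take (perP τ P)) := by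
      apply Finset.image_congr
      intro t ht
      simp only [Finset.mem_coe, Finset.mem_range] at ht
      exact hwin t ht
    rw [himg]
  have hhead : LheadP τ S = LheadP τ P := by
    unfold LheadP
    rw [hperS, hroot]
    have hset : {s | s < perP τ P ∧ (S.drop s).take (perP τ P) = LrootP τ P} =
        {s | s < perP τ P ∧ (P.drop s).take (perP τ P) = LrootP τ P} := by
      ext s
      simp only [Set.mem_setOf_eq]
      constructor <;> rintro ⟨h1, h2⟩ <;> refine ⟨h1, ?_⟩
      · rw [← hwin s h1]; exact h2
      · rw [hwin s h1]; exact h2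
    rw [hset]
  have htail : LtailP τ S = LtailP τ P := by
    unfold LtailP
    rw [hperS, hpendS, hhead]
  have hexp : LexpP τ S = LexpP τ P := by
    unfold LexpP
    rw [hperS, hpendS, hhead]
  have hfull : pendfullP τ S = pendfullP τ P := by
    unfold pendfullP
    rw [hpendS, htail]
  have htyp : typP τ S = typP τ P := by
    unfold typP
    rw [hperS, hpendS]
    have h1 : idx S (pend τ P) = idx P (pend τ P) := by
      unfold idx
      exact (hag (pend τ P - 1) (by omega)).symm
    have h2 : idx S (pend τ P - perP τ P) = idx P (pend τ P - perP τ P) := by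
      unfold idx
      have harith : pend τ P - perP τ P - 1 = pend τ P - 1 - perP τ P := by omega
      rw [harith]
      exact (hag (pend τ P - 1 - perP τ P) (by omega)).symm
    rw [h1, h2]
    have hcond : (pend τ P ≤ S.length ∧ idx P (pend τ P - perP τ P) < idx P (pend τ P)) ↔
        (pend τ P ≤ P.length ∧ idx P (pend τ P - perP τ P) < idx P (pend τ P)) := by
      constructor <;> rintro ⟨_, h⟩
      · exact ⟨hpend, h⟩
      · exact ⟨hSlen, h⟩
    exact if_congr hcond rfl rfl
  exact ⟨⟨by omega, by rw [hperS]; exact hp3⟩, hpendS, htail, hfull, hexp, htyp⟩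

lemma part2 (τ : ℕ) (T P : List ℕ) (hτ : 1 ≤ τ) (hper : Periodic τ P)
    (hpend : pend τ P ≤ P.length) (j : ℕ) (hj1 : 1 ≤ j)
    (hj2 : j + P.length ≤ T.length + 1) (hj3 : sub T j (j + P.length) = P) :
    j ∈ R T τ ∧ rend T τ j - j = pend τ P - 1 ∧ Ltail T τ j = LtailP τ P ∧
    rendfull T τ j - j = pendfullP τ P - 1 ∧ Lexp T τ j = LexpP τ P ∧
    typ T τ j = typP τ P := by
  obtain ⟨hp1, hp3, hτ3, he3, hlcpv, hagE, hbreak⟩ := Pfacts τ P hτ hper hpend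
  have hlenP := hper.1
  have hPsub : (T.drop (j-1)).take P.length = P := by
    unfold sub at hj3
    have harith : j + P.length - j = P.length := by omega
    rwa [harith] at hj3
  have hocc : ∀ i < P.length, T.getD (j-1+i) 0 = P.getD i 0 := by
    intro i hi
    conv_rhs => rw [← hPsub]
    rw [getD_take' _ hi, getD_drop']
  have hagT : ∀ i, i + perP τ P < pend τ P - 1 →
      T.getD (j-1+i) 0 = T.getD (j-1+(i+perP τ P)) 0 := by
    intro i hi
    rw [hocc i (by omega), hocc (i+perP τ P) (by omega)]
    exact hagE i hi
  have hbreakT : T.getD (j-1+(pend τ P - 1 - perP τ P)) 0 ≠ T.getD (j-1+(pend τ P - 1)) 0 := by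
    rw [hocc _ (by omega), hocc _ (by omega)]
    exact hbreak
  have hwin0 : ∀ j' : ℕ, sub T j' (j' + 3*τ - 1) = (T.drop (j'-1)).take (3*τ-1) := by
    intro j'
    unfold sub
    congr 1
    omega
  have hsubj : sub T j (j + 3*τ - 1) = P.take (3*τ-1) := by
    rw [hwin0 j]
    conv_rhs => rw [← hPsub]
    rw [List.take_take]
    congr 1
    omega
  have hperj : per (sub T j (j + 3*τ - 1)) = perP τ P := by
    rw [hsubj]; rfl
  have hjR : j ∈ R T τ := by
    refine ⟨hj1, by omega, ?_⟩
    rw [hperj]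
    exact hp3
  have hmid : ∀ j', j ≤ j' → j' + 3*τ ≤ j + pend τ P → j' ∈ R T τ := by
    intro j' hjj hj'e
    have hlen3 : ((T.drop (j'-1)).take (3*τ-1)).length = 3*τ-1 := by
      rw [List.length_take, List.length_drop]
      omega
    have hipw : IsPeriod ((T.drop (j'-1)).take (3*τ-1)) (perP τ P) := by
      refine ⟨hp1, by rw [hlen3]; omega, ?_⟩
      intro i hi
      rw [hlen3] at hi
      rw [getD_take' _ (by omega), getD_take' _ hi, getD_drop', getD_drop']
      have e1 : j'-1+i = j-1+((j'-j)+i) := by omega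
      have e2 : j'-1+(i+perP τ P) = j-1+((j'-j)+i+perP τ P) := by omega
      rw [e1, e2]
      exact hagT ((j'-j)+i) (by omega)
    refine ⟨by omega, by omega, ?_⟩
    rw [hwin0 j']
    have := per_le hipw
    omega
  have hj0 : (j + (pend τ P - 3*τ + 1)) ∉ R T τ := by
    rintro ⟨-, -, h3⟩
    rw [hwin0] at h3
    set W := (T.drop (j + (pend τ P - 3*τ + 1) - 1)).take (3*τ-1) with hW
    have hWlen : W.length = 3*τ-1 := by
      rw [hW, List.length_take, List.length_drop]
      omega
    have hWne : W ≠ [] := by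
      intro h
      rw [h] at hWlen
      simp at hWlen
      omega
    have hq := per_isPeriod hWne
    have hq1 : 1 ≤ per W := hq.1
    have hq3 : 3 * per W ≤ τ := h3
    set f : ℕ → ℕ := fun i => T.getD (j + (pend τ P - 3*τ + 1) - 1 + i) 0 with hf
    have hfq : ∀ i, i + per W < 3*τ-1 → f i = f (i + per W) := by
      intro i hi
      have h2 := hq.2.2 i (by rw [hWlen]; exact hi)
      rw [hW, getD_take' _ (by omega), getD_take' _ hi, getD_drop', getD_drop'] at h2
      simp only [hf]
      exact h2
    have hfp : ∀ i, i + perP τ P < 3*τ-2 → f i = f (i + perP τ P) := by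
      intro i hi
      simp only [hf]
      have e1 : j + (pend τ P - 3*τ + 1) - 1 + i = j-1+((pend τ P - 3*τ + 1) + i) := by omega
      have e2 : j + (pend τ P - 3*τ + 1) - 1 + (i + perP τ P) =
          j-1+((pend τ P - 3*τ + 1) + i + perP τ P) := by omega
      rw [e1, e2]
      exact hagT ((pend τ P - 3*τ + 1) + i) (by omega)
    have hgcd := fine_wilf (perP τ P) (per W) hp1 hq1 f (3*τ-2)
      (fun i hi => hfp i hi) (fun i hi => hfq i (by omega)) (by omega)
    have hg1 : 1 ≤ Nat.gcd (perP τ P) (per W) := Nat.gcd_pos_of_pos_left _ (by omega)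
    have hfab : f (3*τ-2-per W) = f (3*τ-2-perP τ P) := by
      rcases le_total (perP τ P) (per W) with h | h
      · refine congr_mod_period f (3*τ-2) _ _ _ hg1 hgcd (by omega) (by omega) ?_
        have e3 : (3*τ-2-perP τ P) - (3*τ-2-per W) = per W - perP τ P := by omega
        rw [e3]
        exact Nat.dvd_sub (Nat.gcd_dvd_right _ _) (Nat.gcd_dvd_left _ _)
      · refine (congr_mod_period f (3*τ-2) _ _ _ hg1 hgcd (by omega) (by omega) ?_).symm
        have e3 : (3*τ-2-per W) - (3*τ-2-perP τ P) = perP τ P - per W := by omega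
        rw [e3]
        exact Nat.dvd_sub (Nat.gcd_dvd_left _ _) (Nat.gcd_dvd_right _ _)
    have hlast : f (3*τ-2) = f (3*τ-2-per W) := by
      have h4 := hfq (3*τ-2-per W) (by omega)
      have e3 : 3*τ-2-per W + per W = 3*τ-2 := by omega
      rw [e3] at h4
      exact h4.symm
    have hx1 : f (3*τ-2) = T.getD (j-1+(pend τ P - 1)) 0 := by
      simp only [hf]
      congr 1
      omega
    have hx2 : f (3*τ-2-perP τ P) = T.getD (j-1+(pend τ P - 1 - perP τ P)) 0 := by
      simp only [hf]
      congr 1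
      omega
    apply hbreakT
    rw [← hx2, ← hx1, hlast, hfab]
  have hsinf : sInf {j' | j ≤ j' ∧ j' ∉ R T τ} = j + (pend τ P - 3*τ + 1) := by
    have hmem : (j + (pend τ P - 3*τ + 1)) ∈ {j' | j ≤ j' ∧ j' ∉ R T τ} := ⟨by omega, hj0⟩
    apply le_antisymm (Nat.sInf_le hmem)
    have hne : {j' | j ≤ j' ∧ j' ∉ R T τ}.Nonempty := ⟨_, hmem⟩
    obtain ⟨hs1, hs2⟩ := Nat.sInf_mem hne
    by_contra hlt
    push_neg at hlt
    exact hs2 (hmid _ hs1 (by omega))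
  have hrend : rend T τ j = j + (pend τ P - 1) := by
    unfold rend
    rw [hsinf]
    omega
  have hwinP : ∀ t < perP τ P, sub T (j+t) (j+t+perP τ P) = (P.drop t).take (perP τ P) := by
    intro t ht
    unfold sub
    have e1 : j + t + perP τ P - (j + t) = perP τ P := by omega
    rw [e1]
    apply take_drop_ext T P (j+t-1) t (perP τ P) (by omega) (by omega)
    intro i hi
    have e2 : j+t-1+i = j-1+(t+i) := by omega
    rw [e2]
    exact hocc (t+i) (by omega)
  have hrootj : Lroot T τ j = LrootP τ P := by
    unfold Lroot LrootP
    rw [hperj]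
    have himg : (Finset.range (perP τ P)).image (fun t => sub T (j+t) (j+t+perP τ P)) =
        (Finset.range (perP τ P)).image (fun t => (P.drop t).take (perP τ P)) := by
      apply Finset.image_congr
      intro t ht
      simp only [Finset.mem_coe, Finset.mem_range] at ht
      exact hwinP t ht
    rw [himg]
  have hheadj : Lhead T τ j = LheadP τ P := by
    unfold Lhead LheadP
    rw [hperj, hrootj]
    have hset : {s | s < perP τ P ∧ sub T (j+s) (j+s+perP τ P) = LrootP τ P} =
        {s | s < perP τ P ∧ (P.drop s).take (perP τ P) = LrootP τ P} := by
      ext s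
      simp only [Set.mem_setOf_eq]
      constructor <;> rintro ⟨h1, h2⟩ <;> refine ⟨h1, ?_⟩
      · rw [← hwinP s h1]; exact h2
      · rw [hwinP s h1]; exact h2
    rw [hset]
  have htailj : Ltail T τ j = LtailP τ P := by
    unfold Ltail LtailP
    rw [hperj, hrend, hheadj]
    have e1 : j + (pend τ P - 1) - j - LheadP τ P = pend τ P - 1 - LheadP τ P := by omega
    rw [e1]
  have hexpj : Lexp T τ j = LexpP τ P := by
    unfold Lexp LexpP
    rw [hperj, hrend, hheadj]
    have e1 : j + (pend τ P - 1) - j - LheadP τ P = pend τ P - 1 - LheadP τ P := by omega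
    rw [e1]
  have hLt : LtailP τ P < perP τ P := by
    unfold LtailP
    exact Nat.mod_lt _ (by omega)
  have hfullj : rendfull T τ j - j = pendfullP τ P - 1 := by
    unfold rendfull pendfullP
    rw [hrend, htailj]
    omega
  have htypj : typ T τ j = typP τ P := by
    unfold typ typP
    rw [hperj, hrend]
    have h1 : idx T (j + (pend τ P - 1)) = idx P (pend τ P) := by
      unfold idx
      have e1 : j + (pend τ P - 1) - 1 = j-1+(pend τ P - 1) := by omega
      rw [e1]
      exact hocc _ (by omega)
    have h2 : idx T (j + (pend τ P - 1) - perP τ P) = idx P (pend τ P - perP τ P) := by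
      unfold idx
      have e1 : j + (pend τ P - 1) - perP τ P - 1 = j-1+(pend τ P - 1 - perP τ P) := by omega
      have e2 : pend τ P - perP τ P - 1 = pend τ P - 1 - perP τ P := by omega
      rw [e1, e2]
      exact hocc _ (by omega)
    rw [h1, h2]
    have hcond : (j + (pend τ P - 1) ≤ T.length ∧
        idx P (pend τ P - perP τ P) < idx P (pend τ P)) ↔
        (pend τ P ≤ P.length ∧ idx P (pend τ P - perP τ P) < idx P (pend τ P)) := by
      constructor <;> rintro ⟨-, h⟩
      · exact ⟨hpend, h⟩
      · exact ⟨by omega, h⟩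
    exact if_congr hcond rfl rfl
  exact ⟨hjR, by rw [hrend]; omega, htailj, hfullj, hexpj, htypj⟩

/-- Lemma: extensions and occurrences of a periodic pattern with
`pend(P) ≤ m`. -/
theorem statement_12
    (σ n τ : ℕ) (T : List ℕ)
    (hσ : 2 ≤ σ) (hn : 2 ≤ n) (hτ : 1 ≤ τ)
    (hlen : T.length = n) (halph : ∀ c ∈ T, c < σ)
    (hlast : idx T n = 0) (huniq : ∀ i, 1 ≤ i → i < n → idx T i ≠ 0)
    (P : List ℕ) (m : ℕ) (hm : P.length = m) (halphP : ∀ c ∈ P, c < σ)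
    (hperiodic : Periodic τ P) (hpend : pend τ P ≤ m) :
    (∀ S : List ℕ, S ≠ [] → (∀ c ∈ S, c < σ) → pend τ P ≤ lcp P S →
      Periodic τ S ∧ pend τ S = pend τ P ∧ LtailP τ S = LtailP τ P ∧
      pendfullP τ S = pendfullP τ P ∧ LexpP τ S = LexpP τ P ∧
      typP τ S = typP τ P) ∧
    (∀ j ∈ OccSet P T, j ∈ R T τ ∧ rend T τ j - j = pend τ P - 1 ∧
      Ltail T τ j = LtailP τ P ∧ rendfull T τ j - j = pendfullP τ P - 1 ∧
      Lexp T τ j = LexpP τ P ∧ typ T τ j = typP τ P) := by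
  
  subst hm
  constructor
  · intro S _ _ hlcpPS
    exact part1 τ P hτ hperiodic hpend S hlcpPS
  · intro j hj
    obtain ⟨hj1, hj2, hj3⟩ := hj
    exact part2 τ T P hτ hperiodic hpend j hj1 hj2 hj3
end CSA
end
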